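/- Let X be a Lipschitz connected metric space with intrinsic metric d_IX. If the metric d_X is complete, then d_IX is complete: every sequence in X that is Cauchy with respect to d_IX converges with respect to d_IX to some point of X. -/

import Mathlib

/-- The metric segment `[x,z] = {y : d(x,y) + d(y,z) = d(x,z)}`. -/
def MetricSegment {X : Type*} [MetricSpace X] (x z : X) : Set X :=
  {y | dist x y + dist y z = dist x z}

/-- A metric space is an ℝ-tree if every metric segment `[x,y]` is isometric to the
real interval `[0, d(x,y)]`, and `[x,y] ∩ [y,z] = {y}` implies `d(x,z) = d(x,y) + d(y,z)`. -/
def IsRTree (X : Type*) [MetricSpace X] : Prop :=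
  (∀ x y : X, Nonempty ((MetricSegment x y) ≃ᵢ (Set.Icc (0:ℝ) (dist x y)))) ∧
  (∀ x y z : X, MetricSegment x y ∩ MetricSegment y z = {y} →
    dist x z = dist x y + dist y z)

/-- A metric space `X` is injective if every 1-Lipschitz map into `X` from a subset of a
metric space extends to a 1-Lipschitz map on the whole space. -/
def IsInjectiveMetricSpace (X : Type*) [MetricSpace X] : Prop :=
  ∀ (A : Type) [MetricSpace A] (B : Set A) (f : B → X), LipschitzWith 1 f →
    ∃ g : A → X, LipschitzWith 1 g ∧ ∀ b : B, g b = f b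

/-- A metric space is Lipschitz connected if any two points are joined by a Lipschitz
path `f : [0,1] → X`. -/
def LipschitzConnected (X : Type*) [MetricSpace X] : Prop :=
  ∀ x y : X, ∃ f : Set.Icc (0:ℝ) 1 → X, (∃ K : NNReal, LipschitzWith K f) ∧
    f ⟨0, by norm_num⟩ = x ∧ f ⟨1, by norm_num⟩ = y

/-- The intrinsic metric: the infimum of Lipschitz constants of paths joining `x` and `y`. -/
noncomputable def intrinsicDist {X : Type*} [MetricSpace X] (x y : X) : ℝ :=
  sInf {K : ℝ | 0 ≤ K ∧ ∃ f : Set.Icc (0:ℝ) 1 → X,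
    LipschitzWith K.toNNReal f ∧ f ⟨0, by norm_num⟩ = x ∧ f ⟨1, by norm_num⟩ = y}

/-- A metric space is analytic if it is a continuous image of a complete separable
metric space. -/
def IsAnalyticMetricSpace (X : Type*) [MetricSpace X] : Prop :=
  ∃ (Z : Type) (_ : MetricSpace Z) (_ : CompleteSpace Z)
    (_ : TopologicalSpace.SeparableSpace Z) (g : Z → X),
      Continuous g ∧ Function.Surjective g

/-- `L`-Lipschitz connectedness: any two points `x,y` are joined by an `L`-Lipschitz
path defined on `[0, d(x,y)]`. -/
def LLipschitzConnected (L : NNReal) (Y : Type*) [MetricSpace Y] : Prop :=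
  ∀ x y : Y, ∃ f : Set.Icc (0:ℝ) (dist x y) → Y, LipschitzWith L f ∧
    f ⟨0, ⟨le_refl 0, dist_nonneg⟩⟩ = x ∧ f ⟨dist x y, ⟨dist_nonneg, le_refl _⟩⟩ = y

/-- Hyperconvexity: every family of closed balls with `d(xᵢ,xⱼ) ≤ rᵢ + rⱼ` has a
common point. -/
def Hyperconvex (X : Type*) [MetricSpace X] : Prop :=
  ∀ (I : Type) (x : I → X) (r : I → ℝ), (∀ i, 0 ≤ r i) →
    (∀ i j, dist (x i) (x j) ≤ r i + r j) →
    (⋂ i, Metric.closedBall (x i) (r i)).Nonempty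

/-- Metric convexity. -/
def MetricallyConvex (X : Type*) [MetricSpace X] : Prop :=
  ∀ a b : X, ∀ t : ℝ, t ∈ Set.Icc (0:ℝ) 1 →
    ∃ x : X, dist a x = t * dist a b ∧ dist x b = (1 - t) * dist a b

/-- Binary intersection property: every family of pairwise intersecting closed balls
has a common point. -/
def BinaryIntersectionProperty (X : Type*) [MetricSpace X] : Prop :=
  ∀ (I : Type) (x : I → X) (r : I → ℝ),
    (∀ i j, (Metric.closedBall (x i) (r i) ∩ Metric.closedBall (x j) (r j)).Nonempty) →
    (⋂ i, Metric.closedBall (x i) (r i)).Nonempty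


section MyAux

open Set Filter

variable {X : Type*} [MetricSpace X]

lemma myIntrinsicSet_bddBelow (x y : X) :
    BddBelow {K : ℝ | 0 ≤ K ∧ ∃ f : Set.Icc (0:ℝ) 1 → X,
      LipschitzWith K.toNNReal f ∧ f ⟨0, by norm_num⟩ = x ∧ f ⟨1, by norm_num⟩ = y} :=
  ⟨0, fun _ hK => hK.1⟩

lemma myIntrinsicSet_nonempty (h : LipschitzConnected X) (x y : X) :
    Set.Nonempty {K : ℝ | 0 ≤ K ∧ ∃ f : Set.Icc (0:ℝ) 1 → X,
      LipschitzWith K.toNNReal f ∧ f ⟨0, by norm_num⟩ = x ∧ f ⟨1, by norm_num⟩ = y} := by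
  obtain ⟨f, ⟨K, hK⟩, h0, h1⟩ := h x y
  exact ⟨K, K.coe_nonneg, f, by simpa [Real.toNNReal_coe] using hK, h0, h1⟩

lemma my_dist_le_intrinsic (h : LipschitzConnected X) (x y : X) :
    dist x y ≤ intrinsicDist x y := by
  apply le_csInf (myIntrinsicSet_nonempty h x y)
  rintro K ⟨hK0, f, hf, h0, h1⟩
  have hd := hf.dist_le_mul ⟨0, by norm_num⟩ ⟨1, by norm_num⟩
  rw [h0, h1] at hd
  have : dist (⟨0, by norm_num⟩ : Set.Icc (0:ℝ) 1) ⟨1, by norm_num⟩ = 1 := by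
    rw [Subtype.dist_eq, Real.dist_eq]; norm_num
  rw [this, mul_one, Real.coe_toNNReal K hK0] at hd
  exact hd

lemma my_exists_path (h : LipschitzConnected X) {x y : X} {c : ℝ}
    (hc : intrinsicDist x y < c) :
    ∃ f : Set.Icc (0:ℝ) 1 → X, LipschitzWith c.toNNReal f ∧
      f ⟨0, by norm_num⟩ = x ∧ f ⟨1, by norm_num⟩ = y := by
  obtain ⟨K, hKmem, hKc⟩ := (csInf_lt_iff (myIntrinsicSet_bddBelow x y)
    (myIntrinsicSet_nonempty h x y)).mp hc
  obtain ⟨hK0, f, hf, h0, h1⟩ := hKmem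
  exact ⟨f, hf.weaken (Real.toNNReal_mono hKc.le), h0, h1⟩

lemma myIdx_ex {s : ℝ} (hs : s < 1) : ∃ k : ℕ, s < 1 - (2:ℝ)⁻¹ ^ (k + 1) := by
  obtain ⟨n, hn⟩ := exists_pow_lt_of_lt_one (by linarith : (0:ℝ) < 1 - s)
    (by norm_num : (2:ℝ)⁻¹ < 1)
  refine ⟨n, ?_⟩
  have : (2:ℝ)⁻¹ ^ (n + 1) ≤ (2:ℝ)⁻¹ ^ n :=
    pow_le_pow_of_le_one (by norm_num) (by norm_num) (Nat.le_succ n)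
  linarith

/-- Index of the dyadic interval `[1 - 2⁻ᵏ, 1 - 2⁻⁽ᵏ⁺¹⁾)` containing `s`. -/
noncomputable def myIdx (s : ℝ) : ℕ :=
  if hs : s < 1 then Nat.find (myIdx_ex hs) else 0

lemma myIdx_lt {s : ℝ} (hs : s < 1) : s < 1 - (2:ℝ)⁻¹ ^ (myIdx s + 1) := by
  rw [myIdx, dif_pos hs]; exact Nat.find_spec (myIdx_ex hs)

lemma myIdx_ge {s : ℝ} (h0 : 0 ≤ s) (hs : s < 1) : 1 - (2:ℝ)⁻¹ ^ (myIdx s) ≤ s := by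
  rw [myIdx, dif_pos hs]
  cases' hk : Nat.find (myIdx_ex hs) with j
  · simpa using h0
  · have := Nat.find_min (myIdx_ex hs) (by omega : j < Nat.find (myIdx_ex hs))
    push_neg at this
    simpa [hk] using this

lemma myIdx_le {s : ℝ} (hs : s < 1) {k : ℕ} (hk : s < 1 - (2:ℝ)⁻¹ ^ (k + 1)) :
    myIdx s ≤ k := by
  rw [myIdx, dif_pos hs]; exact Nat.find_le hk

lemma myIdx_breakpoint (k : ℕ) : myIdx (1 - (2:ℝ)⁻¹ ^ k) = k := by
  have hpow : ∀ m : ℕ, (0:ℝ) < (2:ℝ)⁻¹ ^ m := fun m => pow_pos (by norm_num) m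
  have hs : (1:ℝ) - (2:ℝ)⁻¹ ^ k < 1 := by have := hpow k; linarith
  have hlt : (1:ℝ) - (2:ℝ)⁻¹ ^ k < 1 - (2:ℝ)⁻¹ ^ (k + 1) := by
    have h1 : (2:ℝ)⁻¹ ^ (k + 1) < (2:ℝ)⁻¹ ^ k := by
      apply pow_lt_pow_right_of_lt_one₀ (by norm_num) (by norm_num); omega
    linarith
  refine le_antisymm (myIdx_le hs hlt) ?_
  by_contra hcon
  push_neg at hcon
  have hub := myIdx_lt hs
  have hmono : (2:ℝ)⁻¹ ^ k ≤ (2:ℝ)⁻¹ ^ (myIdx (1 - (2:ℝ)⁻¹ ^ k) + 1) :=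
    pow_le_pow_of_le_one (by norm_num) (by norm_num) (by omega)
  linarith

lemma myIdx_mono {s s' : ℝ} (hss : s ≤ s') (hs' : s' < 1) :
    myIdx s ≤ myIdx s' := by
  have hs : s < 1 := lt_of_le_of_lt hss hs'
  exact myIdx_le hs (lt_of_le_of_lt hss (myIdx_lt hs'))

lemma my_pow_cancel (k : ℕ) : (2:ℝ)⁻¹ ^ k * 2 ^ k = 1 := by
  rw [← mul_pow]; norm_num

lemma myGlue_mem {s : ℝ} (hm : s ∈ Set.Icc (0:ℝ) 1) (hs : s < 1) :
    (s - (1 - (2:ℝ)⁻¹ ^ (myIdx s))) * 2 ^ (myIdx s + 1) ∈ Set.Icc (0:ℝ) 1 := by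
  have h1 := myIdx_ge hm.1 hs
  have h2 := myIdx_lt hs
  constructor
  · apply mul_nonneg (by linarith) (le_of_lt (pow_pos (by norm_num) _))
  · have key : s - (1 - (2:ℝ)⁻¹ ^ (myIdx s)) ≤ (2:ℝ)⁻¹ ^ (myIdx s + 1) := by
      have : (2:ℝ)⁻¹ ^ (myIdx s) - (2:ℝ)⁻¹ ^ (myIdx s + 1) = (2:ℝ)⁻¹ ^ (myIdx s + 1) := by
        rw [pow_succ]; ring
    
      linarith
    calc (s - (1 - (2:ℝ)⁻¹ ^ (myIdx s))) * 2 ^ (myIdx s + 1)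
        ≤ (2:ℝ)⁻¹ ^ (myIdx s + 1) * 2 ^ (myIdx s + 1) :=
          mul_le_mul_of_nonneg_right key (le_of_lt (pow_pos (by norm_num) _))
      _ = 1 := my_pow_cancel _

/-- The concatenation of countably many paths on dyadic intervals, with endpoint `p`. -/
noncomputable def myGlue (f : ℕ → Set.Icc (0:ℝ) 1 → X) (p : X) : Set.Icc (0:ℝ) 1 → X :=
  fun s => if hs : (s:ℝ) < 1 then
    f (myIdx s) ⟨((s:ℝ) - (1 - (2:ℝ)⁻¹ ^ (myIdx (s:ℝ)))) * 2 ^ (myIdx (s:ℝ) + 1),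
      myGlue_mem s.2 hs⟩
  else p

section GlueLemmas

variable (f : ℕ → Set.Icc (0:ℝ) 1 → X) (v : ℕ → X) (p : X) {ε : ℝ}

lemma myGlue_one (hm : (1:ℝ) ∈ Set.Icc (0:ℝ) 1) : myGlue f p ⟨1, hm⟩ = p := by
  rw [myGlue, dif_neg (by norm_num)]

lemma myGlue_eq_of (s : Set.Icc (0:ℝ) 1) (hs : (s:ℝ) < 1) {k : ℕ}
    (hk : myIdx (s:ℝ) = k) :
    myGlue f p s = f k ⟨((s:ℝ) - (1 - (2:ℝ)⁻¹ ^ k)) * 2 ^ (k + 1),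
      by rw [← hk]; exact myGlue_mem s.2 hs⟩ := by
  subst hk
  rw [myGlue, dif_pos hs]

lemma myGlue_breakpoint (k : ℕ) (hm : (1 - (2:ℝ)⁻¹ ^ k) ∈ Set.Icc (0:ℝ) 1) :
    myGlue f p ⟨_, hm⟩ = f k ⟨0, by norm_num⟩ := by
  have hpow : (0:ℝ) < (2:ℝ)⁻¹ ^ k := pow_pos (by norm_num) k
  have hs : ((⟨_, hm⟩ : Set.Icc (0:ℝ) 1) : ℝ) < 1 := by simpa using hpow
  rw [myGlue_eq_of f p _ hs (myIdx_breakpoint k)]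
  congr 1
  exact Subtype.ext (by push_cast; ring)

variable (hε : 0 < ε)
  (hf : ∀ k, LipschitzWith (ε * (2:ℝ)⁻¹ ^ (k + 1)).toNNReal (f k))
  (hf0 : ∀ k, f k ⟨0, by norm_num⟩ = v k)
  (hf1 : ∀ k, f k ⟨1, by norm_num⟩ = v (k + 1))

include hε hf hf0 hf1

set_option linter.unusedSectionVars false

lemma my_dist_f (k : ℕ) (a b : Set.Icc (0:ℝ) 1) :
    dist (f k a) (f k b) ≤ ε * (2:ℝ)⁻¹ ^ (k + 1) * |(a:ℝ) - (b:ℝ)| := by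
  have := (hf k).dist_le_mul a b
  rwa [Real.coe_toNNReal _ (by positivity), Subtype.dist_eq, Real.dist_eq] at this

lemma myGlue_dist_right (s : Set.Icc (0:ℝ) 1) (hs : (s:ℝ) < 1) :
    dist (myGlue f p s) (v (myIdx (s:ℝ) + 1)) ≤ ε * ((1 - (2:ℝ)⁻¹ ^ (myIdx (s:ℝ) + 1)) - s) := by
  have hmem := myGlue_mem s.2 hs
  rw [myGlue_eq_of f p s hs rfl, ← hf1 (myIdx (s:ℝ))]
  refine le_trans (my_dist_f f v hε hf hf0 hf1 _ _ _) (le_of_eq ?_)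
  set k := myIdx (s:ℝ) with hk
  have hc := my_pow_cancel (k + 1)
  have h2q : (2:ℝ)⁻¹ ^ k = 2 * (2:ℝ)⁻¹ ^ (k + 1) := by rw [pow_succ]; ring
  push_cast
  rw [abs_of_nonpos (by linarith [hmem.2])]
  rw [h2q]
  linear_combination (ε * (1 - (s:ℝ) - 2 * (2:ℝ)⁻¹ ^ (k + 1))) * hc

lemma myGlue_dist_left (s : Set.Icc (0:ℝ) 1) (hs : (s:ℝ) < 1) :
    dist (v (myIdx (s:ℝ))) (myGlue f p s) ≤ ε * ((s:ℝ) - (1 - (2:ℝ)⁻¹ ^ (myIdx (s:ℝ)))) := by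
  have hmem := myGlue_mem s.2 hs
  rw [myGlue_eq_of f p s hs rfl, ← hf0 (myIdx (s:ℝ))]
  refine le_trans (my_dist_f f v hε hf hf0 hf1 _ _ _) (le_of_eq ?_)
  set k := myIdx (s:ℝ) with hk
  have hc := my_pow_cancel (k + 1)
  have h2q : (2:ℝ)⁻¹ ^ k = 2 * (2:ℝ)⁻¹ ^ (k + 1) := by rw [pow_succ]; ring
  push_cast
  rw [abs_of_nonpos (by linarith [hmem.1])]
  rw [h2q]
  linear_combination (ε * ((s:ℝ) - 1 + 2 * (2:ℝ)⁻¹ ^ (k + 1))) * hc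

lemma myGlue_dist_same (s s' : Set.Icc (0:ℝ) 1) (hss : (s:ℝ) ≤ (s':ℝ))
    (hs : (s:ℝ) < 1) (hs' : (s':ℝ) < 1) (heq : myIdx (s:ℝ) = myIdx (s':ℝ)) :
    dist (myGlue f p s) (myGlue f p s') ≤ ε * ((s':ℝ) - (s:ℝ)) := by
  have hk' : myIdx ((s':ℝ)) = myIdx ((s:ℝ)) := heq.symm
  rw [myGlue_eq_of f p s hs rfl, myGlue_eq_of f p s' hs' hk']
  refine le_trans (my_dist_f f v hε hf hf0 hf1 _ _ _) (le_of_eq ?_)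
  set k := myIdx (s:ℝ) with hk
  have hc := my_pow_cancel (k + 1)
  have hP : (0:ℝ) < 2 ^ (k + 1) := pow_pos (by norm_num) _
  push_cast
  have hre : ((s:ℝ) - (1 - (2:ℝ)⁻¹ ^ k)) * 2 ^ (k + 1) -
      ((s':ℝ) - (1 - (2:ℝ)⁻¹ ^ k)) * 2 ^ (k + 1) = -(((s':ℝ) - (s:ℝ)) * 2 ^ (k + 1)) := by
    ring
  rw [hre, abs_neg, abs_of_nonneg (mul_nonneg (by linarith) hP.le)]
  linear_combination (ε * ((s':ℝ) - (s:ℝ))) * hc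

lemma my_telescope (k m : ℕ) :
    dist (v k) (v (k + m)) ≤ ε * ((2:ℝ)⁻¹ ^ k - (2:ℝ)⁻¹ ^ (k + m)) := by
  induction m with
  | zero => simp
  | succ m ih =>
    have hstep : dist (v (k + m)) (v (k + m + 1)) ≤ ε * (2:ℝ)⁻¹ ^ (k + m + 1) := by
      have := my_dist_f f v hε hf hf0 hf1 (k + m) ⟨0, by norm_num⟩ ⟨1, by norm_num⟩
      rw [hf0, hf1] at this
      have habs : |((⟨0, by norm_num⟩ : Set.Icc (0:ℝ) 1) : ℝ) -
          ((⟨1, by norm_num⟩ : Set.Icc (0:ℝ) 1) : ℝ)| = 1 := by norm_num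
      rw [habs, mul_one] at this
      exact this
    have htri := dist_triangle (v k) (v (k + m)) (v (k + m + 1))
    have h2q : ε * (2:ℝ)⁻¹ ^ (k + m) = 2 * (ε * (2:ℝ)⁻¹ ^ (k + m + 1)) := by
      rw [pow_succ]; ring
    have hkm : k + (m + 1) = k + m + 1 := by omega
    rw [hkm]
    nlinarith [ih, hstep, htri, h2q]

lemma myGlue_lip_lt1 (s s' : Set.Icc (0:ℝ) 1) (hss : (s:ℝ) ≤ (s':ℝ)) (hs' : (s':ℝ) < 1) :
    dist (myGlue f p s) (myGlue f p s') ≤ ε * ((s':ℝ) - (s:ℝ)) := by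
  have hs : (s:ℝ) < 1 := lt_of_le_of_lt hss hs'
  have hkk : myIdx (s:ℝ) ≤ myIdx (s':ℝ) := myIdx_mono hss hs'
  rcases eq_or_lt_of_le hkk with heq | hlt
  · exact myGlue_dist_same f v p hε hf hf0 hf1 s s' hss hs hs' heq
  · have h1 := myGlue_dist_right f v p hε hf hf0 hf1 s hs
    have h3 := myGlue_dist_left f v p hε hf hf0 hf1 s' hs'
    have h2 : dist (v (myIdx (s:ℝ) + 1)) (v (myIdx (s':ℝ))) ≤
        ε * ((2:ℝ)⁻¹ ^ (myIdx (s:ℝ) + 1) - (2:ℝ)⁻¹ ^ (myIdx (s':ℝ))) := by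
      have := my_telescope f v hε hf hf0 hf1 (myIdx (s:ℝ) + 1)
        (myIdx (s':ℝ) - (myIdx (s:ℝ) + 1))
      rwa [show myIdx (s:ℝ) + 1 + (myIdx (s':ℝ) - (myIdx (s:ℝ) + 1)) = myIdx (s':ℝ)
        from by omega] at this
    have htri := dist_triangle4 (myGlue f p s) (v (myIdx (s:ℝ) + 1))
      (v (myIdx (s':ℝ))) (myGlue f p s')
    linarith [h1, h2, h3, htri]

lemma myGlue_dist_endpoint (hv : Filter.Tendsto v Filter.atTop (nhds p))
    (s : Set.Icc (0:ℝ) 1) (hs : (s:ℝ) < 1) :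
    dist (myGlue f p s) p ≤ ε * (1 - (s:ℝ)) := by
  have key : ∀ m, myIdx (s:ℝ) + 1 ≤ m → dist (myGlue f p s) (v m) ≤ ε * (1 - (s:ℝ)) := by
    intro m hm
    have h1 := myGlue_dist_right f v p hε hf hf0 hf1 s hs
    have h2 : dist (v (myIdx (s:ℝ) + 1)) (v m) ≤
        ε * ((2:ℝ)⁻¹ ^ (myIdx (s:ℝ) + 1) - (2:ℝ)⁻¹ ^ m) := by
      have := my_telescope f v hε hf hf0 hf1 (myIdx (s:ℝ) + 1) (m - (myIdx (s:ℝ) + 1))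
      rwa [show myIdx (s:ℝ) + 1 + (m - (myIdx (s:ℝ) + 1)) = m from by omega] at this
    have htri := dist_triangle (myGlue f p s) (v (myIdx (s:ℝ) + 1)) (v m)
    have hq : (0:ℝ) ≤ (2:ℝ)⁻¹ ^ m := by positivity
    nlinarith [h1, h2, htri, hq, hε]
  have hlim : Filter.Tendsto (fun m => dist (myGlue f p s) (v m)) Filter.atTop
      (nhds (dist (myGlue f p s) p)) := tendsto_const_nhds.dist hv
  exact le_of_tendsto hlim (Filter.eventually_atTop.mpr ⟨myIdx (s:ℝ) + 1, key⟩)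

lemma my_concat (hv : Filter.Tendsto v Filter.atTop (nhds p)) :
    intrinsicDist (v 0) p ≤ ε := by
  apply csInf_le (myIntrinsicSet_bddBelow _ _)
  have hle : ∀ a b : Set.Icc (0:ℝ) 1, (a:ℝ) ≤ (b:ℝ) →
      dist (myGlue f p a) (myGlue f p b) ≤ ε * ((b:ℝ) - (a:ℝ)) := by
    intro a b hab
    by_cases hb : (b:ℝ) < 1
    · exact myGlue_lip_lt1 f v p hε hf hf0 hf1 a b hab hb
    · have hb1 : (b:ℝ) = 1 := le_antisymm b.2.2 (not_lt.mp hb)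
      have hgb : myGlue f p b = p := by rw [myGlue, dif_neg (by rw [hb1]; norm_num)]
      rw [hgb]
      by_cases ha : (a:ℝ) < 1
      · have := myGlue_dist_endpoint f v p hε hf hf0 hf1 hv a ha
        rw [hb1]; exact this
      · have ha1 : (a:ℝ) = 1 := le_antisymm a.2.2 (not_lt.mp ha)
        have hga : myGlue f p a = p := by rw [myGlue, dif_neg (by rw [ha1]; norm_num)]
        rw [hga, dist_self, ha1, hb1]
        norm_num
  refine ⟨hε.le, myGlue f p, ?_, ?_, myGlue_one f p (by norm_num)⟩
  · apply LipschitzWith.of_dist_le_mul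
    intro a b
    rw [Real.coe_toNNReal _ hε.le, Subtype.dist_eq, Real.dist_eq]
    rcases le_total (a:ℝ) (b:ℝ) with hab | hab
    · rw [abs_of_nonpos (by linarith)]
      have := hle a b hab
      linarith [this]
    · rw [abs_of_nonneg (by linarith), dist_comm]
      exact hle b a hab
  · have h0 : ((⟨0, by norm_num⟩ : Set.Icc (0:ℝ) 1)) =
        ⟨1 - (2:ℝ)⁻¹ ^ 0, by norm_num⟩ := Subtype.ext (by norm_num)
    rw [h0, myGlue_breakpoint f p 0 (by norm_num)]
    exact hf0 0

end GlueLemmas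

end MyAux

/-- If a Lipschitz connected metric space is complete, then its intrinsic metric is
complete: every sequence Cauchy with respect to the intrinsic metric converges with
respect to the intrinsic metric. -/
theorem intrinsic_complete_of_complete (X : Type) [MetricSpace X] [CompleteSpace X]
    (h : LipschitzConnected X) (u : ℕ → X)
    (hcauchy : ∀ ε : ℝ, 0 < ε → ∃ N : ℕ, ∀ n ≥ N, ∀ m ≥ N, intrinsicDist (u n) (u m) < ε) :
    ∃ p : X, ∀ ε : ℝ, 0 < ε → ∃ N : ℕ, ∀ n ≥ N, intrinsicDist (u n) p < ε := by
  have hdint : ∀ x y : X, dist x y ≤ intrinsicDist x y := my_dist_le_intrinsic h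
  have hcs : CauchySeq u := by
    rw [Metric.cauchySeq_iff]
    intro ε hε
    obtain ⟨N, hN⟩ := hcauchy ε hε
    exact ⟨N, fun m hm n hn => lt_of_le_of_lt (hdint _ _) (hN m hm n hn)⟩
  obtain ⟨p, hp⟩ := cauchySeq_tendsto_of_complete hcs
  refine ⟨p, fun ε hε => ?_⟩
  have hε' : 0 < ε / 2 := by positivity
  have hsel : ∀ k : ℕ, ∃ N : ℕ, ∀ n ≥ N, ∀ m ≥ N,
      intrinsicDist (u n) (u m) < (ε / 2) * (2:ℝ)⁻¹ ^ (k + 1) := fun k =>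
    hcauchy _ (by positivity)
  choose N' hN' using hsel
  refine ⟨N' 0, fun n hn => ?_⟩
  let M : ℕ → ℕ := fun k => Nat.rec n (fun k mk => max (mk + 1) (N' (k + 1))) k
  have hM0 : M 0 = n := rfl
  have hMsucc : ∀ k, M (k + 1) = max (M k + 1) (N' (k + 1)) := fun _ => rfl
  have hMge : ∀ k, N' k ≤ M k := by
    intro k
    cases k with
    | zero => simpa [hM0] using hn
    | succ k => rw [hMsucc]; exact le_max_right _ _
  have hsm : StrictMono M := strictMono_nat_of_lt_succ (fun k => by
    rw [hMsucc]; exact lt_of_lt_of_le (Nat.lt_succ_self _) (le_max_left _ _))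
  have hgap : ∀ k, intrinsicDist (u (M k)) (u (M (k + 1))) < (ε / 2) * (2:ℝ)⁻¹ ^ (k + 1) := by
    intro k
    exact hN' k _ (hMge k) _ (le_trans (hMge k) (hsm.monotone (Nat.le_succ k)))
  have hpaths : ∀ k, ∃ g : Set.Icc (0:ℝ) 1 → X,
      LipschitzWith ((ε / 2) * (2:ℝ)⁻¹ ^ (k + 1)).toNNReal g ∧
      g ⟨0, by norm_num⟩ = u (M k) ∧ g ⟨1, by norm_num⟩ = u (M (k + 1)) := fun k =>
    my_exists_path h (hgap k)
  choose g hg hg0 hg1 using hpaths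
  have hv : Filter.Tendsto (fun k => u (M k)) Filter.atTop (nhds p) :=
    hp.comp hsm.tendsto_atTop
  have hcon := my_concat g (fun k => u (M k)) p hε' hg hg0 hg1 hv
  simp only [hM0] at hcon
  linarith
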